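/- Let d ≥ 1 be an integer, 1 < α₀ < ϑ₀ < 2, c₂ ≥ 1, and κ, η > 0. There exists a constant C ≥ 1, depending only on d, α₀, ϑ₀ and c₂, such that for every α ∈ [α₀, ϑ₀], every pair of invertible real d×d matrices A, B satisfying c₂^{−1}·‖v‖² ≤ ‖Av‖² ≤ c₂·‖v‖² and c₂^{−1}·‖v‖² ≤ ‖Bv‖² ≤ c₂·‖v‖² for all v ∈ ℝ^d, every pair of points x, y ∈ ℝ^d with x ≠ y, and every m ∈ [0,1]: ∫_{ℝ^d} ‖z‖^m·( q_Ψ(z) + q_{Ψ⁻¹}(z) ) dz ≤ C·( min(‖x−y‖, κ) )^{m−α}. -/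

import Mathlib

open Real MeasureTheory

/-- The constant `c_{d,α} = α·2^(α−2)·Γ((d+α)/2) / (π^(d/2)·Γ((2−α)/2))`. -/
noncomputable def stableConst (d : ℕ) (α : ℝ) : ℝ :=
  α * (2 : ℝ) ^ (α - 2) * Real.Gamma ((d + α) / 2) /
    (Real.pi ^ ((d : ℝ) / 2) * Real.Gamma ((2 - α) / 2))

/-- The radial truncation `(w)_κ = (min(κ,‖w‖)/‖w‖)·w`. -/
noncomputable def truncVec {d : ℕ} (κ : ℝ) (w : EuclideanSpace ℝ (Fin d)) :
    EuclideanSpace ℝ (Fin d) :=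
  (min κ ‖w‖ / ‖w‖) • w

/-- The map `Ψ(z) = B⁻¹(Az + (x−y)_κ)`. -/
noncomputable def psiMap {d : ℕ} (κ : ℝ) (A B : Matrix (Fin d) (Fin d) ℝ)
    (x y : EuclideanSpace ℝ (Fin d)) (z : EuclideanSpace ℝ (Fin d)) :
    EuclideanSpace ℝ (Fin d) :=
  Matrix.toEuclideanLin B⁻¹ (Matrix.toEuclideanLin A z + truncVec κ (x - y))

/-- The inverse map `Ψ⁻¹(z) = A⁻¹(Bz − (x−y)_κ)`. -/
noncomputable def psiInvMap {d : ℕ} (κ : ℝ) (A B : Matrix (Fin d) (Fin d) ℝ)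
    (x y : EuclideanSpace ℝ (Fin d)) (z : EuclideanSpace ℝ (Fin d)) :
    EuclideanSpace ℝ (Fin d) :=
  Matrix.toEuclideanLin A⁻¹ (Matrix.toEuclideanLin B z - truncVec κ (x - y))

/-- The density
`min( 𝟙_{0<‖z‖≤η}·c_{d,α}·‖z‖^{−(d+α)},
      𝟙_{0<‖Φ(z)‖≤η}·c_{d,α}·detfac·‖Φ(z)‖^{−(d+α)} )`. -/
noncomputable def couplingDensity {d : ℕ} (α η detfac : ℝ)
    (Φ : EuclideanSpace ℝ (Fin d) → EuclideanSpace ℝ (Fin d))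
    (z : EuclideanSpace ℝ (Fin d)) : ℝ :=
  min (if 0 < ‖z‖ ∧ ‖z‖ ≤ η then stableConst d α * ‖z‖ ^ (-((d : ℝ) + α)) else 0)
      (if 0 < ‖Φ z‖ ∧ ‖Φ z‖ ≤ η then
          stableConst d α * detfac * ‖Φ z‖ ^ (-((d : ℝ) + α)) else 0)

section Aux

open Set Metric

lemma aux_coord_abs_le_norm {d : ℕ} (w : EuclideanSpace ℝ (Fin d)) (i : Fin d) : |w i| ≤ ‖w‖ := by
  rw [EuclideanSpace.norm_eq, ← Real.sqrt_sq_eq_abs]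
  apply Real.sqrt_le_sqrt
  have h := Finset.single_le_sum (f := fun j : Fin d => ‖w j‖ ^ 2)
    (fun j _ => sq_nonneg _) (Finset.mem_univ i)
  simpa [Real.norm_eq_abs, sq_abs] using h

lemma aux_sqrt_le {x y c : ℝ} (hx : 0 ≤ x) (hy : 0 ≤ y) (hc : 0 ≤ c) (h : x ^ 2 ≤ c * y ^ 2) :
    x ≤ Real.sqrt c * y := by
  have h2 := Real.sqrt_le_sqrt h
  rwa [Real.sqrt_sq hx, Real.sqrt_mul hc, Real.sqrt_sq hy] at h2

lemma aux_toEuclideanLin_inv_apply {d : ℕ} {M : Matrix (Fin d) (Fin d) ℝ} (hM : IsUnit M)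
    (u : EuclideanSpace ℝ (Fin d)) :
    Matrix.toEuclideanLin M (Matrix.toEuclideanLin M⁻¹ u) = u := by
  have h : M * M⁻¹ = 1 := Matrix.mul_nonsing_inv M ((Matrix.isUnit_iff_isUnit_det M).mp hM)
  simp [Matrix.toEuclideanLin_apply, Matrix.mulVec_mulVec, h, Matrix.one_mulVec]

lemma aux_abs_det_le {d : ℕ} {M : Matrix (Fin d) (Fin d) ℝ} {s : ℝ}
    (h : ∀ v : EuclideanSpace ℝ (Fin d), ‖Matrix.toEuclideanLin M v‖ ≤ s * ‖v‖) :
    |M.det| ≤ (d.factorial : ℝ) * s ^ d := by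
  have hentry : ∀ i j, |M i j| ≤ s := by
    intro i j
    have h1 : Matrix.toEuclideanLin M (EuclideanSpace.single j (1:ℝ)) i = M i j := by
      have e : Matrix.toEuclideanLin M (EuclideanSpace.single j (1:ℝ)) i
          = M.mulVec (Pi.single j (1:ℝ)) i := rfl
      rw [e, Matrix.mulVec_single]; exact mul_one _
    have h2 := aux_coord_abs_le_norm (Matrix.toEuclideanLin M (EuclideanSpace.single j (1:ℝ))) i
    rw [h1] at h2
    calc |M i j| ≤ ‖Matrix.toEuclideanLin M (EuclideanSpace.single j (1:ℝ))‖ := h2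
      _ ≤ s * ‖EuclideanSpace.single j (1:ℝ)‖ := h _
      _ = s := by rw [EuclideanSpace.norm_single]; simp
  have h3 := Matrix.det_le (A := M) (abv := (AbsoluteValue.abs : AbsoluteValue ℝ ℝ)) (x := s) hentry
  simpa [Fintype.card_fin, nsmul_eq_mul] using h3

lemma aux_stableConst_pos {d : ℕ} {α : ℝ} (h0 : 0 < α) (h2 : α < 2) : 0 < stableConst d α := by
  have h1 : 0 < Real.Gamma ((d + α) / 2) := Real.Gamma_pos_of_pos (by positivity)
  have h3 : 0 < Real.Gamma ((2 - α) / 2) := Real.Gamma_pos_of_pos (by linarith)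
  have h4 : (0:ℝ) < Real.pi ^ ((d:ℝ) / 2) := Real.rpow_pos_of_pos Real.pi_pos _
  have h5 : (0:ℝ) < (2:ℝ) ^ (α - 2) := Real.rpow_pos_of_pos two_pos _
  exact div_pos (by positivity) (by positivity)

lemma aux_couplingDensity_nonneg {d : ℕ} {α η detfac : ℝ} (hα : 0 ≤ stableConst d α)
    (hdet : 0 ≤ detfac) (Φ : EuclideanSpace ℝ (Fin d) → EuclideanSpace ℝ (Fin d))
    (z : EuclideanSpace ℝ (Fin d)) : 0 ≤ couplingDensity α η detfac Φ z := by
  unfold couplingDensity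
  apply le_min <;> split <;> positivity

end Aux

set_option maxHeartbeats 2000000 in
theorem stmt2 (d : ℕ) (hd : 1 ≤ d) (α₀ ϑ₀ c₂ : ℝ)
    (hα₀ : 1 < α₀) (hα₀ϑ₀ : α₀ < ϑ₀) (hϑ₀ : ϑ₀ < 2) (hc₂ : 1 ≤ c₂) :
    ∃ C ≥ (1 : ℝ), ∀ κ η : ℝ, 0 < κ → 0 < η → ∀ α ∈ Set.Icc α₀ ϑ₀,
      ∀ A B : Matrix (Fin d) (Fin d) ℝ, IsUnit A → IsUnit B →
      (∀ v : EuclideanSpace ℝ (Fin d),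
        c₂⁻¹ * ‖v‖ ^ 2 ≤ ‖Matrix.toEuclideanLin A v‖ ^ 2 ∧
          ‖Matrix.toEuclideanLin A v‖ ^ 2 ≤ c₂ * ‖v‖ ^ 2) →
      (∀ v : EuclideanSpace ℝ (Fin d),
        c₂⁻¹ * ‖v‖ ^ 2 ≤ ‖Matrix.toEuclideanLin B v‖ ^ 2 ∧
          ‖Matrix.toEuclideanLin B v‖ ^ 2 ≤ c₂ * ‖v‖ ^ 2) →
      ∀ x y : EuclideanSpace ℝ (Fin d), x ≠ y → ∀ m ∈ Set.Icc (0 : ℝ) 1,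
        (∫ z : EuclideanSpace ℝ (Fin d),
            ‖z‖ ^ m *
              (couplingDensity α η |(A⁻¹ * B).det| (psiInvMap κ A B x y) z +
                couplingDensity α η |(B⁻¹ * A).det| (psiMap κ A B x y) z))
          ≤ C * (min ‖x - y‖ κ) ^ (m - α) := by
  classical
  have hd1 : (1:ℝ) ≤ (d:ℝ) := by exact_mod_cast hd
  have hc₂0 : (0:ℝ) < c₂ := lt_of_lt_of_le one_pos hc₂
  -- continuity of the Gamma function at positive points
  have hGammaCont : ∀ c : ℝ, 0 < c → ContinuousAt Real.Gamma c := by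
    intro c hc
    refine (Real.differentiableAt_Gamma ?_).continuousAt
    intro n
    exact (ne_of_gt (lt_of_le_of_lt (neg_nonpos.mpr (Nat.cast_nonneg n)) hc))
  have hIcc : (Set.Icc α₀ ϑ₀).Nonempty := ⟨α₀, le_refl _, hα₀ϑ₀.le⟩
  have hcont1 : ContinuousOn (fun a : ℝ => Real.Gamma (((d:ℝ) + a) / 2)) (Set.Icc α₀ ϑ₀) := by
    intro a ha
    have h0 : (0:ℝ) < ((d:ℝ) + a) / 2 := by linarith [ha.1]
    have hf : ContinuousAt (fun a : ℝ => ((d:ℝ) + a) / 2) a := by fun_prop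
    exact (ContinuousAt.comp (f := fun a : ℝ => ((d:ℝ) + a) / 2) (x := a)
      (hGammaCont _ h0) hf).continuousWithinAt
  have hcont2 : ContinuousOn (fun a : ℝ => Real.Gamma ((2 - a) / 2)) (Set.Icc α₀ ϑ₀) := by
    intro a ha
    have h0 : (0:ℝ) < (2 - a) / 2 := by linarith [ha.2]
    have hf : ContinuousAt (fun a : ℝ => (2 - a) / 2) a := by fun_prop
    exact (ContinuousAt.comp (f := fun a : ℝ => (2 - a) / 2) (x := a)
      (hGammaCont _ h0) hf).continuousWithinAt
  obtain ⟨Gmax, hGmax⟩ := isCompact_Icc.exists_bound_of_continuousOn hcont1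
  obtain ⟨β, hβmem, hβmin⟩ := isCompact_Icc.exists_isMinOn hIcc hcont2
  set ε : ℝ := Real.Gamma ((2 - β) / 2) with hε_def
  have hε0 : 0 < ε := Real.Gamma_pos_of_pos (by have := hβmem.2; linarith)
  set cM : ℝ := max 1 (2 * Gmax / ε) with hcM_def
  have hcM1 : (1:ℝ) ≤ cM := le_max_left _ _
  have hcM0 : (0:ℝ) < cM := lt_of_lt_of_le one_pos hcM1
  have hcM : ∀ a ∈ Set.Icc α₀ ϑ₀, stableConst d a ≤ cM := by
    intro a ha
    have hg1 : Real.Gamma (((d:ℝ) + a) / 2) ≤ Gmax := by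
      have h := hGmax a ha
      calc Real.Gamma (((d:ℝ) + a)/2) ≤ |Real.Gamma (((d:ℝ)+a)/2)| := le_abs_self _
        _ ≤ Gmax := by simpa [Real.norm_eq_abs] using h
    have hg2 : ε ≤ Real.Gamma ((2 - a) / 2) := hβmin ha
    have hγ1 : 0 < Real.Gamma (((d:ℝ) + a) / 2) := Real.Gamma_pos_of_pos (by linarith [ha.1])
    have h2a : (2:ℝ) ^ (a - 2) ≤ 1 :=
      Real.rpow_le_one_of_one_le_of_nonpos one_le_two (by linarith [ha.2])
    have h2a0 : (0:ℝ) < (2:ℝ) ^ (a - 2) := Real.rpow_pos_of_pos two_pos _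
    have hπ : (1:ℝ) ≤ Real.pi ^ ((d:ℝ) / 2) := by
      calc (1:ℝ) = Real.pi ^ (0:ℝ) := by rw [Real.rpow_zero]
        _ ≤ Real.pi ^ ((d:ℝ)/2) := Real.rpow_le_rpow_of_exponent_le
            (by linarith [Real.pi_gt_three]) (by positivity)
    have ha2 : a ≤ 2 := by linarith [ha.2]
    have ha0 : 0 < a := by linarith [ha.1]
    have s1 : a * (2:ℝ) ^ (a - 2) ≤ 2 := by nlinarith [mul_le_mul_of_nonneg_left h2a ha0.le]
    have hnum : a * (2:ℝ) ^ (a - 2) * Real.Gamma (((d:ℝ) + a) / 2) ≤ 2 * Gmax :=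
      mul_le_mul s1 hg1 hγ1.le (by norm_num)
    have hden : (1:ℝ) * ε ≤ Real.pi ^ ((d:ℝ) / 2) * Real.Gamma ((2 - a) / 2) :=
      mul_le_mul hπ hg2 hε0.le (by positivity)
    calc stableConst d a ≤ (2 * Gmax) / (1 * ε) := by
          rw [stableConst]
          exact div_le_div₀ (by linarith [hg1, hγ1]) hnum (by linarith) hden
      _ = 2 * Gmax / ε := by rw [one_mul]
      _ ≤ cM := le_max_right _ _
  set DM : ℝ := ((d.factorial : ℝ))^2 * c₂ ^ d with hDM_def
  have hfac1 : (1:ℝ) ≤ (d.factorial : ℝ) := by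
    exact_mod_cast Nat.one_le_iff_ne_zero.mpr d.factorial_ne_zero
  have hc2d : (1:ℝ) ≤ c₂ ^ d := one_le_pow₀ hc₂
  have hDM1 : (1:ℝ) ≤ DM := by rw [hDM_def]; nlinarith
  set vol : ℝ := (volume (Metric.ball (0 : EuclideanSpace ℝ (Fin d)) 1)).toReal with hvol_def
  have hvol0 : 0 ≤ vol := ENNReal.toReal_nonneg
  set C₀ : ℝ := (d:ℝ) * vol * (2*cM) * (DM + (α₀ - 1)⁻¹) * (4 * c₂) with hC₀_def
  refine ⟨max 1 C₀, le_max_left _ _, ?_⟩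
  intro κ η hκ hη α hα A B hAu hBu hA hB x y hxy m hm
  haveI : Nontrivial (EuclideanSpace ℝ (Fin d)) := by
    refine ⟨⟨EuclideanSpace.single ⟨0, hd⟩ (1:ℝ), 0, ?_⟩⟩
    intro h
    have h2 := congrArg (fun v : EuclideanSpace ℝ (Fin d) => ‖v‖) h
    simp [EuclideanSpace.norm_single] at h2
  have hα1 : 1 < α := lt_of_lt_of_le hα₀ hα.1
  have hα2 : α < 2 := lt_of_le_of_lt hα.2 hϑ₀
  have hm0 : 0 ≤ m := hm.1
  have hm1 : m ≤ 1 := hm.2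
  set s : ℝ := Real.sqrt c₂ with hs_def
  have hs1 : 1 ≤ s := by
    rw [hs_def, show (1:ℝ) = Real.sqrt 1 by simp]
    exact Real.sqrt_le_sqrt hc₂
  have hs0 : 0 < s := lt_of_lt_of_le one_pos hs1
  have hs2 : s ^ 2 = c₂ := Real.sq_sqrt hc₂0.le
  -- operator norm bounds
  have keyUp : ∀ M : Matrix (Fin d) (Fin d) ℝ,
      (∀ v : EuclideanSpace ℝ (Fin d), ‖Matrix.toEuclideanLin M v‖ ^ 2 ≤ c₂ * ‖v‖ ^ 2) →
      ∀ v : EuclideanSpace ℝ (Fin d), ‖Matrix.toEuclideanLin M v‖ ≤ s * ‖v‖ :=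
    fun M hM v => aux_sqrt_le (norm_nonneg _) (norm_nonneg _) hc₂0.le (hM v)
  have hAup := keyUp A (fun v => (hA v).2)
  have hBup := keyUp B (fun v => (hB v).2)
  have keyInvUp : ∀ M : Matrix (Fin d) (Fin d) ℝ, IsUnit M →
      (∀ v : EuclideanSpace ℝ (Fin d), c₂⁻¹ * ‖v‖ ^ 2 ≤ ‖Matrix.toEuclideanLin M v‖ ^ 2) →
      ∀ u : EuclideanSpace ℝ (Fin d), ‖Matrix.toEuclideanLin M⁻¹ u‖ ≤ s * ‖u‖ := by
    intro M hMu hM u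
    apply aux_sqrt_le (norm_nonneg _) (norm_nonneg _) hc₂0.le
    have h1 := hM (Matrix.toEuclideanLin M⁻¹ u)
    rw [aux_toEuclideanLin_inv_apply hMu u] at h1
    calc ‖Matrix.toEuclideanLin M⁻¹ u‖ ^ 2
        = c₂ * (c₂⁻¹ * ‖Matrix.toEuclideanLin M⁻¹ u‖ ^ 2) := by
          field_simp
      _ ≤ c₂ * ‖u‖ ^ 2 := mul_le_mul_of_nonneg_left h1 hc₂0.le
  have hAinvUp := keyInvUp A hAu (fun v => (hA v).1)
  have hBinvUp := keyInvUp B hBu (fun v => (hB v).1)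
  have keyInvLow : ∀ M : Matrix (Fin d) (Fin d) ℝ, IsUnit M →
      (∀ v : EuclideanSpace ℝ (Fin d), ‖Matrix.toEuclideanLin M v‖ ≤ s * ‖v‖) →
      ∀ u : EuclideanSpace ℝ (Fin d), ‖u‖ ≤ s * ‖Matrix.toEuclideanLin M⁻¹ u‖ := by
    intro M hMu hM u
    have h1 := hM (Matrix.toEuclideanLin M⁻¹ u)
    rwa [aux_toEuclideanLin_inv_apply hMu u] at h1
  have hAinvLow := keyInvLow A hAu hAup
  have hBinvLow := keyInvLow B hBu hBup
  -- the displacement and radius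
  set δ : ℝ := min ‖x - y‖ κ with hδ_def
  have hxy0 : 0 < ‖x - y‖ := by rw [norm_pos_iff]; exact sub_ne_zero_of_ne hxy
  have hδ0 : 0 < δ := lt_min hxy0 hκ
  have hwnorm : ‖truncVec κ (x - y)‖ = δ := by
    rw [truncVec, norm_smul, Real.norm_eq_abs,
      abs_of_nonneg (by positivity), div_mul_cancel₀ _ (ne_of_gt hxy0), hδ_def, min_comm]
  set r : ℝ := δ / (2 * s) with hr_def
  have hr0 : 0 < r := by rw [hr_def]; positivity
  have hsr : s * r = δ / 2 := by rw [hr_def]; field_simp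
  -- determinant bounds
  have hsd : (s ^ d) * (s ^ d) = c₂ ^ d := by
    rw [← pow_add, ← two_mul, pow_mul, hs2]
  have hdetBound : ∀ M N : Matrix (Fin d) (Fin d) ℝ,
      (∀ v : EuclideanSpace ℝ (Fin d), ‖Matrix.toEuclideanLin M v‖ ≤ s * ‖v‖) →
      (∀ v : EuclideanSpace ℝ (Fin d), ‖Matrix.toEuclideanLin N v‖ ≤ s * ‖v‖) →
      |(M * N).det| ≤ DM := by
    intro M N hM hN
    rw [Matrix.det_mul, abs_mul]
    calc |M.det| * |N.det|
        ≤ ((d.factorial:ℝ) * s ^ d) * ((d.factorial:ℝ) * s ^ d) :=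
          mul_le_mul (aux_abs_det_le hM) (aux_abs_det_le hN) (abs_nonneg _)
            (by positivity)
      _ = (d.factorial:ℝ)^2 * ((s ^ d) * (s ^ d)) := by ring
      _ = DM := by rw [hsd, hDM_def]
  have hdet1 : |(A⁻¹ * B).det| ≤ DM := hdetBound A⁻¹ B hAinvUp hBup
  have hdet2 : |(B⁻¹ * A).det| ≤ DM := hdetBound B⁻¹ A hBinvUp hAup
  -- lower bounds on the images under Ψ and Ψ⁻¹
  have hΨinv : ∀ z : EuclideanSpace ℝ (Fin d), ‖z‖ ≤ r → r ≤ ‖psiInvMap κ A B x y z‖ := by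
    intro z hz
    have h1 : ‖Matrix.toEuclideanLin B z‖ ≤ s * ‖z‖ := hBup z
    have h2 : ‖truncVec κ (x - y)‖ - ‖Matrix.toEuclideanLin B z‖
        ≤ ‖Matrix.toEuclideanLin B z - truncVec κ (x - y)‖ := by
      rw [norm_sub_rev]; exact norm_sub_norm_le _ _
    have h3 : ‖Matrix.toEuclideanLin B z - truncVec κ (x - y)‖
        ≤ s * ‖psiInvMap κ A B x y z‖ := hAinvLow _
    rw [hwnorm] at h2
    have hszr : s * ‖z‖ ≤ δ / 2 := by
      calc s * ‖z‖ ≤ s * r := mul_le_mul_of_nonneg_left hz hs0.le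
        _ = δ / 2 := hsr
    have h4 : s * r ≤ s * ‖psiInvMap κ A B x y z‖ := by rw [hsr]; linarith
    exact le_of_mul_le_mul_left h4 hs0
  have hΨ : ∀ z : EuclideanSpace ℝ (Fin d), ‖z‖ ≤ r → r ≤ ‖psiMap κ A B x y z‖ := by
    intro z hz
    have h1 : ‖Matrix.toEuclideanLin A z‖ ≤ s * ‖z‖ := hAup z
    have h2 : δ - ‖Matrix.toEuclideanLin A z‖
        ≤ ‖Matrix.toEuclideanLin A z + truncVec κ (x - y)‖ := by
      have h5 := norm_sub_le (Matrix.toEuclideanLin A z + truncVec κ (x - y))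
        (Matrix.toEuclideanLin A z)
      rw [add_sub_cancel_left, hwnorm] at h5
      linarith
    have h3 : ‖Matrix.toEuclideanLin A z + truncVec κ (x - y)‖
        ≤ s * ‖psiMap κ A B x y z‖ := hBinvLow _
    have hszr : s * ‖z‖ ≤ δ / 2 := by
      calc s * ‖z‖ ≤ s * r := mul_le_mul_of_nonneg_left hz hs0.le
        _ = δ / 2 := hsr
    have h4 : s * r ≤ s * ‖psiMap κ A B x y z‖ := by rw [hsr]; linarith
    exact le_of_mul_le_mul_left h4 hs0
  -- bounds on the coupling density
  have hsc_pos : 0 < stableConst d α := aux_stableConst_pos (by linarith) hα2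
  have hsc_le : stableConst d α ≤ cM := hcM α hα
  have hq_in : ∀ (detfac : ℝ) (Φ : EuclideanSpace ℝ (Fin d) → EuclideanSpace ℝ (Fin d))
      (z : EuclideanSpace ℝ (Fin d)), 0 ≤ detfac → detfac ≤ DM → r ≤ ‖Φ z‖ →
      couplingDensity α η detfac Φ z ≤ cM * DM * r ^ (-((d:ℝ) + α)) := by
    intro detfac Φ z hdf0 hdf hrz
    refine le_trans (min_le_right _ _) ?_
    by_cases h : 0 < ‖Φ z‖ ∧ ‖Φ z‖ ≤ η
    · rw [if_pos h]
      have h1 : ‖Φ z‖ ^ (-((d:ℝ) + α)) ≤ r ^ (-((d:ℝ) + α)) :=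
        Real.rpow_le_rpow_of_nonpos hr0 hrz (by linarith)
      exact mul_le_mul (mul_le_mul hsc_le hdf hdf0 hcM0.le) h1
        (Real.rpow_nonneg (norm_nonneg _) _) (by positivity)
    · rw [if_neg h]
      have h2 : (0:ℝ) < r ^ (-((d:ℝ) + α)) := Real.rpow_pos_of_pos hr0 _
      have h3 : (0:ℝ) ≤ cM * DM := mul_nonneg hcM0.le (by linarith)
      exact mul_nonneg h3 h2.le
  have hq_out : ∀ (detfac : ℝ) (Φ : EuclideanSpace ℝ (Fin d) → EuclideanSpace ℝ (Fin d))
      (z : EuclideanSpace ℝ (Fin d)), 0 < ‖z‖ →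
      couplingDensity α η detfac Φ z ≤ cM * ‖z‖ ^ (-((d:ℝ) + α)) := by
    intro detfac Φ z hz
    refine le_trans (min_le_left _ _) ?_
    by_cases h : 0 < ‖z‖ ∧ ‖z‖ ≤ η
    · rw [if_pos h]
      exact mul_le_mul_of_nonneg_right hsc_le (Real.rpow_nonneg (norm_nonneg _) _)
    · rw [if_neg h]
      have h2 : (0:ℝ) < ‖z‖ ^ (-((d:ℝ) + α)) := Real.rpow_pos_of_pos hz _
      exact mul_nonneg hcM0.le h2.le
  -- the dominating function
  set K₁ : ℝ := 2 * cM * DM * r ^ (-((d:ℝ) + α)) with hK₁_def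
  set K₂ : ℝ := 2 * cM with hK₂_def
  have hrpow0 : (0:ℝ) < r ^ (-((d:ℝ) + α)) := Real.rpow_pos_of_pos hr0 _
  have hK₁0 : (0:ℝ) ≤ K₁ := by
    rw [hK₁_def]
    exact mul_nonneg (mul_nonneg (by linarith) (by linarith)) hrpow0.le
  have hK₂0 : (0:ℝ) ≤ K₂ := by rw [hK₂_def]; linarith
  set p1 : EuclideanSpace ℝ (Fin d) → ℝ := fun z => K₁ * ‖z‖ ^ m with hp1_def
  set p2 : EuclideanSpace ℝ (Fin d) → ℝ :=
    fun z => K₂ * ‖z‖ ^ (m - ((d:ℝ) + α)) with hp2_def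
  set G : EuclideanSpace ℝ (Fin d) → ℝ := fun z =>
    (Metric.closedBall (0 : EuclideanSpace ℝ (Fin d)) r).indicator p1 z
      + ((Metric.closedBall (0 : EuclideanSpace ℝ (Fin d)) r)ᶜ).indicator p2 z with hG_def
  -- pointwise bound
  have hle : ∀ z : EuclideanSpace ℝ (Fin d),
      ‖z‖ ^ m * (couplingDensity α η |(A⁻¹ * B).det| (psiInvMap κ A B x y) z
        + couplingDensity α η |(B⁻¹ * A).det| (psiMap κ A B x y) z) ≤ G z := by
    intro z
    have hzm : (0:ℝ) ≤ ‖z‖ ^ m := Real.rpow_nonneg (norm_nonneg _) _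
    by_cases hz : ‖z‖ ≤ r
    · have hmem : z ∈ Metric.closedBall (0 : EuclideanSpace ℝ (Fin d)) r := by
        rwa [mem_closedBall_zero_iff]
      have hGz : G z = K₁ * ‖z‖ ^ m := by
        simp only [hG_def, hp1_def, Set.indicator_of_mem hmem,
          Set.indicator_of_notMem (Set.notMem_compl_iff.mpr hmem), add_zero]
      rw [hGz]
      have b1 := hq_in _ _ z (abs_nonneg ((A⁻¹ * B).det)) hdet1 (hΨinv z hz)
      have b2 := hq_in _ _ z (abs_nonneg ((B⁻¹ * A).det)) hdet2 (hΨ z hz)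
      calc ‖z‖ ^ m * (couplingDensity α η |(A⁻¹ * B).det| (psiInvMap κ A B x y) z
            + couplingDensity α η |(B⁻¹ * A).det| (psiMap κ A B x y) z)
          ≤ ‖z‖ ^ m * (cM * DM * r ^ (-((d:ℝ) + α)) + cM * DM * r ^ (-((d:ℝ) + α))) :=
            mul_le_mul_of_nonneg_left (add_le_add b1 b2) hzm
        _ = K₁ * ‖z‖ ^ m := by rw [hK₁_def]; ring
    · push_neg at hz
      have hz0 : (0:ℝ) < ‖z‖ := lt_trans hr0 hz
      have hnmem : z ∉ Metric.closedBall (0 : EuclideanSpace ℝ (Fin d)) r := by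
        rw [mem_closedBall_zero_iff]; linarith
      have hGz : G z = K₂ * ‖z‖ ^ (m - ((d:ℝ) + α)) := by
        simp only [hG_def, hp2_def, Set.indicator_of_notMem hnmem,
          Set.indicator_of_mem (Set.mem_compl hnmem), zero_add]
      rw [hGz]
      have b1 := hq_out |(A⁻¹ * B).det| (psiInvMap κ A B x y) z hz0
      have b2 := hq_out |(B⁻¹ * A).det| (psiMap κ A B x y) z hz0
      calc ‖z‖ ^ m * (couplingDensity α η |(A⁻¹ * B).det| (psiInvMap κ A B x y) z
            + couplingDensity α η |(B⁻¹ * A).det| (psiMap κ A B x y) z)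
          ≤ ‖z‖ ^ m * (cM * ‖z‖ ^ (-((d:ℝ) + α)) + cM * ‖z‖ ^ (-((d:ℝ) + α))) :=
            mul_le_mul_of_nonneg_left (add_le_add b1 b2) hzm
        _ = K₂ * (‖z‖ ^ m * ‖z‖ ^ (-((d:ℝ) + α))) := by rw [hK₂_def]; ring
        _ = K₂ * ‖z‖ ^ (m - ((d:ℝ) + α)) := by
            rw [← Real.rpow_add hz0,
              show m + -((d:ℝ) + α) = m - ((d:ℝ) + α) from by ring]
  -- integrability of the dominating function
  have hInt1 : IntegrableOn p1 (Metric.closedBall (0 : EuclideanSpace ℝ (Fin d)) r) volume := by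
    apply Measure.integrableOn_of_bounded (M := K₁ * max 1 (r ^ m)) measure_closedBall_lt_top.ne
    · exact ((measurable_norm.pow_const m).const_mul K₁).aestronglyMeasurable
    · filter_upwards [ae_restrict_mem measurableSet_closedBall] with z hzmem
      have hz : ‖z‖ ≤ r := by rwa [mem_closedBall_zero_iff] at hzmem
      have h1 : ‖z‖ ^ m ≤ max 1 (r ^ m) := by
        rcases le_total ‖z‖ 1 with h | h
        · exact le_max_of_le_left (Real.rpow_le_one (norm_nonneg z) h hm0)
        · exact le_max_of_le_right (Real.rpow_le_rpow (norm_nonneg z) hz hm0)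
      simp only [hp1_def]
      rw [Real.norm_eq_abs,
        abs_of_nonneg (mul_nonneg hK₁0 (Real.rpow_nonneg (norm_nonneg _) _))]
      exact mul_le_mul_of_nonneg_left h1 hK₁0
  have hfr : (Module.finrank ℝ (EuclideanSpace ℝ (Fin d)) : ℝ) < (d:ℝ) + α - m := by
    rw [finrank_euclideanSpace_fin]; linarith
  have hbase : Integrable (fun z : EuclideanSpace ℝ (Fin d) =>
      (K₂ * (1 + 1/r) ^ ((d:ℝ) + α - m)) * (1 + ‖z‖) ^ (-((d:ℝ) + α - m))) volume :=
    (integrable_one_add_norm hfr).const_mul _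
  have hInt2 : IntegrableOn p2
      ((Metric.closedBall (0 : EuclideanSpace ℝ (Fin d)) r)ᶜ) volume := by
    apply Integrable.mono' hbase.integrableOn
    · exact (((measurable_norm.pow_const (m - ((d:ℝ) + α))).const_mul K₂).aestronglyMeasurable).restrict
    · filter_upwards [ae_restrict_mem measurableSet_closedBall.compl] with z hz
      have hrz : r < ‖z‖ := by
        rw [Set.mem_compl_iff, mem_closedBall_zero_iff] at hz
        exact not_le.mp hz
      have hz0 : (0:ℝ) < ‖z‖ := lt_trans hr0 hrz
      simp only [hp2_def]
      rw [Real.norm_eq_abs,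
        abs_of_nonneg (mul_nonneg hK₂0 (Real.rpow_nonneg (norm_nonneg _) _))]
      have hp0 : (0:ℝ) < (d:ℝ) + α - m := by linarith
      have h1z : (0:ℝ) < 1 + ‖z‖ := by positivity
      have key : (1 + ‖z‖) ^ ((d:ℝ) + α - m)
          ≤ (1 + 1/r) ^ ((d:ℝ) + α - m) * ‖z‖ ^ ((d:ℝ) + α - m) := by
        have h3 : (1:ℝ) ≤ ‖z‖ / r := (one_le_div hr0).mpr hrz.le
        have h4 : (1 + 1/r) * ‖z‖ = ‖z‖ + ‖z‖ / r := by ring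
        have h2 : 1 + ‖z‖ ≤ (1 + 1/r) * ‖z‖ := by rw [h4]; linarith
        calc (1 + ‖z‖) ^ ((d:ℝ) + α - m) ≤ ((1 + 1/r) * ‖z‖) ^ ((d:ℝ) + α - m) :=
              Real.rpow_le_rpow h1z.le h2 hp0.le
          _ = (1 + 1/r) ^ ((d:ℝ) + α - m) * ‖z‖ ^ ((d:ℝ) + α - m) :=
              Real.mul_rpow (by positivity) (norm_nonneg z)
      have hmain : ‖z‖ ^ (m - ((d:ℝ) + α))
          ≤ (1 + 1/r) ^ ((d:ℝ) + α - m) * (1 + ‖z‖) ^ (-((d:ℝ) + α - m)) := by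
        rw [show m - ((d:ℝ) + α) = -((d:ℝ) + α - m) from by ring,
          Real.rpow_neg (norm_nonneg z), Real.rpow_neg h1z.le,
          inv_eq_one_div, inv_eq_one_div, mul_one_div,
          div_le_div_iff₀ (Real.rpow_pos_of_pos hz0 _) (Real.rpow_pos_of_pos h1z _)]
        linarith [key]
      calc K₂ * ‖z‖ ^ (m - ((d:ℝ) + α))
          ≤ K₂ * ((1 + 1/r) ^ ((d:ℝ) + α - m) * (1 + ‖z‖) ^ (-((d:ℝ) + α - m))) :=
            mul_le_mul_of_nonneg_left hmain hK₂0
        _ = K₂ * (1 + 1/r) ^ ((d:ℝ) + α - m) * (1 + ‖z‖) ^ (-((d:ℝ) + α - m)) :=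
            (mul_assoc _ _ _).symm
  have hGint1 : Integrable
      ((Metric.closedBall (0:EuclideanSpace ℝ (Fin d)) r).indicator p1) volume :=
    hInt1.integrable_indicator measurableSet_closedBall
  have hGint2 : Integrable
      (((Metric.closedBall (0:EuclideanSpace ℝ (Fin d)) r)ᶜ).indicator p2) volume :=
    hInt2.integrable_indicator measurableSet_closedBall.compl
  have hGint : Integrable G volume := by rw [hG_def]; exact hGint1.add hGint2
  -- rewriting the dominating function in polar coordinates
  set f₁ : ℝ → ℝ := fun t => if t ≤ r then K₁ * t ^ m else 0 with hf₁_def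
  set f₂ : ℝ → ℝ := fun t => if t ≤ r then 0 else K₂ * t ^ (m - ((d:ℝ) + α)) with hf₂_def
  have hind1 : ((Metric.closedBall (0:EuclideanSpace ℝ (Fin d)) r).indicator p1)
      = fun z => f₁ ‖z‖ := by
    funext z
    by_cases h : ‖z‖ ≤ r
    · rw [Set.indicator_of_mem (mem_closedBall_zero_iff.mpr h)]
      simp only [hf₁_def, hp1_def, if_pos h]
    · rw [Set.indicator_of_notMem (fun hc => h (mem_closedBall_zero_iff.mp hc))]
      simp only [hf₁_def, if_neg h]
  have hind2 : (((Metric.closedBall (0:EuclideanSpace ℝ (Fin d)) r)ᶜ).indicator p2)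
      = fun z => f₂ ‖z‖ := by
    funext z
    by_cases h : ‖z‖ ≤ r
    · rw [Set.indicator_of_notMem
        (Set.notMem_compl_iff.mpr (mem_closedBall_zero_iff.mpr h))]
      simp only [hf₂_def, if_pos h]
    · rw [Set.indicator_of_mem
        (Set.mem_compl (fun hc => h (mem_closedBall_zero_iff.mp hc)))]
      simp only [hf₂_def, hp2_def, if_neg h]
  have hpolar1 := MeasureTheory.integral_fun_norm_addHaar
    (volume : Measure (EuclideanSpace ℝ (Fin d))) f₁
  have hpolar2 := MeasureTheory.integral_fun_norm_addHaar
    (volume : Measure (EuclideanSpace ℝ (Fin d))) f₂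
  rw [finrank_euclideanSpace_fin] at hpolar1 hpolar2
  have hcast : ∀ t : ℝ, 0 < t → (t:ℝ) ^ (d - 1) = t ^ ((d:ℝ) - 1) := by
    intro t ht
    rw [← Real.rpow_natCast t (d - 1), Nat.cast_sub hd, Nat.cast_one]
  -- the two radial integrals
  have h1D1 : ∫ t in Set.Ioi (0:ℝ), t ^ (d - 1) • f₁ t
      = K₁ * (r ^ ((d:ℝ) + m) / ((d:ℝ) + m)) := by
    have e : (Set.Ioi (0:ℝ)).indicator (fun t => t ^ (d - 1) • f₁ t)
        = (Set.Ioc (0:ℝ) r).indicator (fun t => K₁ * t ^ ((d:ℝ) - 1 + m)) := by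
      funext t
      by_cases h0 : 0 < t
      · by_cases h1 : t ≤ r
        · rw [Set.indicator_of_mem (Set.mem_Ioi.mpr h0),
            Set.indicator_of_mem (Set.mem_Ioc.mpr ⟨h0, h1⟩)]
          simp only [hf₁_def, if_pos h1, smul_eq_mul]
          rw [hcast t h0, Real.rpow_add h0]
          ring
        · rw [Set.indicator_of_mem (Set.mem_Ioi.mpr h0),
            Set.indicator_of_notMem (fun hc => h1 hc.2)]
          simp only [hf₁_def, if_neg h1, smul_zero]
      · rw [Set.indicator_of_notMem (show t ∉ Set.Ioi (0:ℝ) from by simpa using h0),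
          Set.indicator_of_notMem (show t ∉ Set.Ioc (0:ℝ) r from fun hc => h0 hc.1)]
    calc ∫ t in Set.Ioi (0:ℝ), t ^ (d - 1) • f₁ t
        = ∫ t, (Set.Ioi (0:ℝ)).indicator (fun t => t ^ (d - 1) • f₁ t) t :=
          (integral_indicator measurableSet_Ioi).symm
      _ = ∫ t, (Set.Ioc (0:ℝ) r).indicator (fun t => K₁ * t ^ ((d:ℝ) - 1 + m)) t := by
          rw [e]
      _ = ∫ t in Set.Ioc (0:ℝ) r, K₁ * t ^ ((d:ℝ) - 1 + m) :=
          integral_indicator measurableSet_Ioc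
      _ = K₁ * ∫ t in Set.Ioc (0:ℝ) r, t ^ ((d:ℝ) - 1 + m) := integral_const_mul _ _
      _ = K₁ * (r ^ ((d:ℝ) + m) / ((d:ℝ) + m)) := by
          rw [← intervalIntegral.integral_of_le hr0.le,
            integral_rpow (Or.inl (by linarith : (-1:ℝ) < (d:ℝ) - 1 + m)),
            show (d:ℝ) - 1 + m + 1 = (d:ℝ) + m from by ring,
            Real.zero_rpow (ne_of_gt (by linarith : (0:ℝ) < (d:ℝ) + m)), sub_zero]
  have h1D2 : ∫ t in Set.Ioi (0:ℝ), t ^ (d - 1) • f₂ t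
      = K₂ * (r ^ (m - α) / (α - m)) := by
    have e : (Set.Ioi (0:ℝ)).indicator (fun t => t ^ (d - 1) • f₂ t)
        = (Set.Ioi r).indicator (fun t => K₂ * t ^ (m - 1 - α)) := by
      funext t
      by_cases h0 : 0 < t
      · by_cases h1 : t ≤ r
        · rw [Set.indicator_of_mem (Set.mem_Ioi.mpr h0),
            Set.indicator_of_notMem (show t ∉ Set.Ioi r from by simpa using h1)]
          simp only [hf₂_def, if_pos h1, smul_zero]
        · push_neg at h1
          rw [Set.indicator_of_mem (Set.mem_Ioi.mpr h0),
            Set.indicator_of_mem (Set.mem_Ioi.mpr h1)]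
          simp only [hf₂_def, if_neg (not_le.mpr h1), smul_eq_mul]
          rw [hcast t h0,
            show m - 1 - α = ((d:ℝ) - 1) + (m - ((d:ℝ) + α)) from by ring,
            Real.rpow_add h0]
          ring
      · rw [Set.indicator_of_notMem (show t ∉ Set.Ioi (0:ℝ) from by simpa using h0),
          Set.indicator_of_notMem (show t ∉ Set.Ioi r from
            fun hc => h0 (lt_trans hr0 hc))]
    calc ∫ t in Set.Ioi (0:ℝ), t ^ (d - 1) • f₂ t
        = ∫ t, (Set.Ioi (0:ℝ)).indicator (fun t => t ^ (d - 1) • f₂ t) t :=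
          (integral_indicator measurableSet_Ioi).symm
      _ = ∫ t, (Set.Ioi r).indicator (fun t => K₂ * t ^ (m - 1 - α)) t := by rw [e]
      _ = ∫ t in Set.Ioi r, K₂ * t ^ (m - 1 - α) := integral_indicator measurableSet_Ioi
      _ = K₂ * ∫ t in Set.Ioi r, t ^ (m - 1 - α) := integral_const_mul _ _
      _ = K₂ * (r ^ (m - α) / (α - m)) := by
          rw [integral_Ioi_rpow_of_lt (by linarith : m - 1 - α < -1) hr0,
            show m - 1 - α + 1 = m - α from by ring]
          congr 1
          rw [div_eq_div_iff (ne_of_lt (show m - α < 0 from by linarith))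
            (ne_of_gt (show (0:ℝ) < α - m from by linarith))]
          ring
  have hIG : ∫ z, G z = (d:ℝ) * vol * (K₁ * (r ^ ((d:ℝ) + m) / ((d:ℝ) + m)))
      + (d:ℝ) * vol * (K₂ * (r ^ (m - α) / (α - m))) := by
    rw [hG_def, integral_add hGint1 hGint2, hind1, hind2, hpolar1, hpolar2, h1D1, h1D2]
    simp only [nsmul_eq_mul, smul_eq_mul, measureReal_def, ← hvol_def]
    ring
  -- monotonicity of the integral
  have hmono : (∫ z : EuclideanSpace ℝ (Fin d),
      ‖z‖ ^ m * (couplingDensity α η |(A⁻¹ * B).det| (psiInvMap κ A B x y) z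
        + couplingDensity α η |(B⁻¹ * A).det| (psiMap κ A B x y) z)) ≤ ∫ z, G z := by
    apply integral_mono_of_nonneg ?_ hGint (Filter.Eventually.of_forall hle)
    apply Filter.Eventually.of_forall
    intro z
    have n1 := aux_couplingDensity_nonneg (η := η) hsc_pos.le (abs_nonneg ((A⁻¹ * B).det))
      (psiInvMap κ A B x y) z
    have n2 := aux_couplingDensity_nonneg (η := η) hsc_pos.le (abs_nonneg ((B⁻¹ * A).det))
      (psiMap κ A B x y) z
    exact mul_nonneg (Real.rpow_nonneg (norm_nonneg z) m) (add_nonneg n1 n2)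
  -- final numeric estimates
  have hpow : r ^ (-((d:ℝ) + α)) * r ^ ((d:ℝ) + m) = r ^ (m - α) := by
    rw [← Real.rpow_add hr0]; congr 1; ring
  have hrma : (0:ℝ) < r ^ (m - α) := Real.rpow_pos_of_pos hr0 _
  have hδma : (0:ℝ) < δ ^ (m - α) := Real.rpow_pos_of_pos hδ0 _
  have hdvol : (0:ℝ) ≤ (d:ℝ) * vol := mul_nonneg (Nat.cast_nonneg d) hvol0
  have hrδ : r ^ (m - α) ≤ (4 * c₂) * δ ^ (m - α) := by
    have h2s : (1:ℝ) ≤ 2 * s := by linarith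
    have e1 : r ^ (m - α) = δ ^ (m - α) * (2 * s) ^ (α - m) := by
      rw [hr_def, Real.div_rpow hδ0.le (by linarith : (0:ℝ) ≤ 2 * s), div_eq_mul_inv,
        ← Real.rpow_neg (by linarith : (0:ℝ) ≤ 2 * s), neg_sub]
    have e2 : (2 * s) ^ (α - m) ≤ (2 * s) ^ (2:ℝ) :=
      Real.rpow_le_rpow_of_exponent_le h2s (by linarith)
    have e3 : (2 * s) ^ (2:ℝ) = 4 * c₂ := by
      rw [show (2:ℝ) = ((2:ℕ):ℝ) from by norm_num, Real.rpow_natCast]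
      calc (2 * s) ^ (2:ℕ) = 4 * s ^ 2 := by ring
        _ = 4 * c₂ := by rw [hs2]
    calc r ^ (m - α) = δ ^ (m - α) * (2 * s) ^ (α - m) := e1
      _ ≤ δ ^ (m - α) * (4 * c₂) :=
          mul_le_mul_of_nonneg_left (le_trans e2 (le_of_eq e3)) hδma.le
      _ = (4 * c₂) * δ ^ (m - α) := by ring
  have hT1 : (d:ℝ) * vol * (K₁ * (r ^ ((d:ℝ) + m) / ((d:ℝ) + m)))
      ≤ (d:ℝ) * vol * (2 * cM) * DM * r ^ (m - α) := by
    have e : K₁ * r ^ ((d:ℝ) + m) = 2 * cM * DM * r ^ (m - α) := by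
      calc K₁ * r ^ ((d:ℝ) + m)
          = 2 * cM * DM * (r ^ (-((d:ℝ) + α)) * r ^ ((d:ℝ) + m)) := by rw [hK₁_def]; ring
        _ = 2 * cM * DM * r ^ (m - α) := by rw [hpow]
    have h1 : K₁ * (r ^ ((d:ℝ) + m) / ((d:ℝ) + m)) ≤ 2 * cM * DM * r ^ (m - α) := by
      calc K₁ * (r ^ ((d:ℝ) + m) / ((d:ℝ) + m))
          = (K₁ * r ^ ((d:ℝ) + m)) / ((d:ℝ) + m) := by ring
        _ = (2 * cM * DM * r ^ (m - α)) / ((d:ℝ) + m) := by rw [e]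
        _ ≤ 2 * cM * DM * r ^ (m - α) := div_le_self
            (mul_nonneg (mul_nonneg (by linarith) (by linarith)) hrma.le) (by linarith)
    calc (d:ℝ) * vol * (K₁ * (r ^ ((d:ℝ) + m) / ((d:ℝ) + m)))
        ≤ (d:ℝ) * vol * (2 * cM * DM * r ^ (m - α)) :=
          mul_le_mul_of_nonneg_left h1 hdvol
      _ = (d:ℝ) * vol * (2 * cM) * DM * r ^ (m - α) := by ring
  have hT2 : (d:ℝ) * vol * (K₂ * (r ^ (m - α) / (α - m)))
      ≤ (d:ℝ) * vol * (2 * cM) * (α₀ - 1)⁻¹ * r ^ (m - α) := by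
    have hαm : (0:ℝ) < α - m := by linarith
    have hα₀m : (0:ℝ) < α₀ - 1 := by linarith
    have hd2 : (1:ℝ) / (α - m) ≤ 1 / (α₀ - 1) :=
      one_div_le_one_div_of_le hα₀m (by linarith [hα.1, hm.2])
    have h1 : K₂ * (r ^ (m - α) / (α - m)) ≤ 2 * cM * (α₀ - 1)⁻¹ * r ^ (m - α) := by
      calc K₂ * (r ^ (m - α) / (α - m))
          = K₂ * r ^ (m - α) * (1 / (α - m)) := by ring
        _ ≤ K₂ * r ^ (m - α) * (1 / (α₀ - 1)) :=
            mul_le_mul_of_nonneg_left hd2 (mul_nonneg hK₂0 hrma.le)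
        _ = 2 * cM * (α₀ - 1)⁻¹ * r ^ (m - α) := by rw [hK₂_def]; ring
    calc (d:ℝ) * vol * (K₂ * (r ^ (m - α) / (α - m)))
        ≤ (d:ℝ) * vol * (2 * cM * (α₀ - 1)⁻¹ * r ^ (m - α)) :=
          mul_le_mul_of_nonneg_left h1 hdvol
      _ = (d:ℝ) * vol * (2 * cM) * (α₀ - 1)⁻¹ * r ^ (m - α) := by ring
  have hQ0 : (0:ℝ) ≤ (d:ℝ) * vol * (2 * cM) := mul_nonneg hdvol (by linarith)
  have hsum : (d:ℝ) * vol * (2 * cM) * DM * r ^ (m - α)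
      + (d:ℝ) * vol * (2 * cM) * (α₀ - 1)⁻¹ * r ^ (m - α)
      ≤ C₀ * δ ^ (m - α) := by
    have hinv0 : (0:ℝ) ≤ (α₀ - 1)⁻¹ := inv_nonneg.mpr (by linarith)
    have h1 : (d:ℝ) * vol * (2 * cM) * DM * r ^ (m - α)
        + (d:ℝ) * vol * (2 * cM) * (α₀ - 1)⁻¹ * r ^ (m - α)
        = ((d:ℝ) * vol * (2 * cM) * (DM + (α₀ - 1)⁻¹)) * r ^ (m - α) := by ring
    have h2 : (0:ℝ) ≤ (d:ℝ) * vol * (2 * cM) * (DM + (α₀ - 1)⁻¹) :=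
      mul_nonneg hQ0 (by linarith)
    calc (d:ℝ) * vol * (2 * cM) * DM * r ^ (m - α)
        + (d:ℝ) * vol * (2 * cM) * (α₀ - 1)⁻¹ * r ^ (m - α)
        = ((d:ℝ) * vol * (2 * cM) * (DM + (α₀ - 1)⁻¹)) * r ^ (m - α) := h1
      _ ≤ ((d:ℝ) * vol * (2 * cM) * (DM + (α₀ - 1)⁻¹)) * ((4 * c₂) * δ ^ (m - α)) :=
          mul_le_mul_of_nonneg_left hrδ h2
      _ = C₀ * δ ^ (m - α) := by rw [hC₀_def]; ring
  calc (∫ z : EuclideanSpace ℝ (Fin d),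
      ‖z‖ ^ m * (couplingDensity α η |(A⁻¹ * B).det| (psiInvMap κ A B x y) z
        + couplingDensity α η |(B⁻¹ * A).det| (psiMap κ A B x y) z))
      ≤ ∫ z, G z := hmono
    _ = (d:ℝ) * vol * (K₁ * (r ^ ((d:ℝ) + m) / ((d:ℝ) + m)))
        + (d:ℝ) * vol * (K₂ * (r ^ (m - α) / (α - m))) := hIG
    _ ≤ C₀ * δ ^ (m - α) := le_trans (add_le_add hT1 hT2) hsum
    _ ≤ max 1 C₀ * δ ^ (m - α) :=
        mul_le_mul_of_nonneg_right (le_max_right 1 C₀) hδma.le
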